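/- arXiv:1611.03790 — 2 statements merged into one kernel-verified Lean document; each statement's English description precedes it below -/
import Mathlib

section
/- Let C̃ be obtained from a CSS code C by the full X-type generator splitting procedure (so that ñ_Z = n_Z, with the rows of H̃_Z in bijection with the rows of H_Z), and let ε > 0. If C is ε-Z-cosound, then C̃ is ε-Z-cosound. -/
open Matrix

/-- The weight of a vector over `F₂`: the number of nonzero entries. -/
def wt {α : Type*} [Fintype α] (v : α → ZMod 2) : ℕ :=
  (Finset.univ.filter fun j => v j ≠ 0).card

/-- Maximum weight of a row of a matrix over `F₂`. -/
def maxRowW {m α : Type*} [Fintype m] [Fintype α] (M : Matrix m α (ZMod 2)) : ℕ :=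
  Finset.univ.sup fun i => wt (M i)

/-- Maximum weight of a column of a matrix over `F₂`. -/
def maxColW {m α : Type*} [Fintype m] [Fintype α] (M : Matrix m α (ZMod 2)) : ℕ :=
  Finset.univ.sup fun j => wt fun i => M i j

/-- Total number of nonzero entries of a matrix over `F₂`. -/
def totW {m α : Type*} [Fintype m] [Fintype α] (M : Matrix m α (ZMod 2)) : ℕ :=
  ∑ i, wt (M i)

variable {N nX nZ : ℕ}

/-- Qubits of the code obtained by the full X-type generator splitting procedure:
the original `N` qubits, plus, for each row of `HX` of weight `w ≥ 4` (a "heavy" row),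
cut qubits `(1),…,(w−3)` (0-indexed below). -/
abbrev SplitQ (HX : Matrix (Fin nX) (Fin N) (ZMod 2)) : Type :=
  Fin N ⊕ Σ i : {i : Fin nX // 4 ≤ wt (HX i)}, Fin (wt (HX i.1) - 3)

/-- X-type generators of the fully split code: the rows of `HX` of weight `≤ 3`,
plus, for each heavy row, the `w−2` rows created by splitting it. -/
abbrev SplitXIdx (HX : Matrix (Fin nX) (Fin N) (ZMod 2)) : Type :=
  {i : Fin nX // ¬ 4 ≤ wt (HX i)} ⊕ Σ i : {i : Fin nX // 4 ≤ wt (HX i)}, Fin (wt (HX i.1) - 2)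

/-- X-type generator matrix of the code `C̃` obtained from `C` by applying the X-type
generator splitting step once to each row of `HX` of weight at least 4 (the result is the
same in any order).  Here `q i` enumerates, in a fixed order, the support of the heavy
row `i`.  Splitting a heavy row with support `{q₁,…,q_w}` produces `w−2` rows with
supports `{q₁,q₂,(1)}`, `{(m),q_{m+2},(m+1)}` for `m = 1,…,w−4`, and `{(w−3),q_{w−1},q_w}`,
on the original qubits together with that row's own cut qubits. -/
def splitHX (HX : Matrix (Fin nX) (Fin N) (ZMod 2))
    (q : ∀ i : {i : Fin nX // 4 ≤ wt (HX i)}, Fin (wt (HX i.1)) → Fin N) :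
    Matrix (SplitXIdx HX) (SplitQ HX) (ZMod 2) := fun r j =>
  match r, j with
  | Sum.inl i, Sum.inl p => HX i.1 p
  | Sum.inl _, Sum.inr _ => 0
  | Sum.inr ⟨i, r⟩, Sum.inl p =>
      have hw : 4 ≤ wt (HX i.1) := i.2
      if (r.val = 0 ∧ (p = q i ⟨0, by omega⟩ ∨ p = q i ⟨1, by omega⟩)) ∨
         (1 ≤ r.val ∧ r.val ≤ wt (HX i.1) - 4 ∧
           p = q i ⟨r.val + 1, by have := r.isLt; omega⟩) ∨
         (r.val = wt (HX i.1) - 3 ∧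
           (p = q i ⟨wt (HX i.1) - 2, by omega⟩ ∨ p = q i ⟨wt (HX i.1) - 1, by omega⟩))
      then 1 else 0
  | Sum.inr ⟨i, r⟩, Sum.inr ⟨i', c⟩ =>
      if i' = i ∧ (c.val = r.val ∨ c.val + 1 = r.val) then 1 else 0

/-- Z-type generator matrix of the code `C̃` obtained from `C` by the full X-type generator
splitting procedure: each row `R` of `HZ` agrees with `R` on the original qubits, and its
entry at the cut qubit `(m)` of heavy row `i` is the parity of
`|supp(R) ∩ {q_{i,1},…,q_{i,m+1}}|`. -/
def splitHZ (HX : Matrix (Fin nX) (Fin N) (ZMod 2)) (HZ : Matrix (Fin nZ) (Fin N) (ZMod 2))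
    (q : ∀ i : {i : Fin nX // 4 ≤ wt (HX i)}, Fin (wt (HX i.1)) → Fin N) :
    Matrix (Fin nZ) (SplitQ HX) (ZMod 2) := fun R j =>
  match j with
  | Sum.inl p => HZ R p
  | Sum.inr ⟨i, m⟩ => ∑ a : Fin (wt (HX i.1)), if a.val ≤ m.val + 1 then HZ R (q i a) else 0

/-- A CSS code (given by its Z-type generator matrix `HZ`) is `ε`-Z-cosound if for every
`a` with `aᵀ·H_Z ≠ 0` there exists `b` with `bᵀ·H_Z = 0` and
`wt(aᵀ·H_Z) ≥ ε·wt(a+b)`. -/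
def ZCosound {m α : Type*} [Fintype m] [Fintype α] (ε : ℝ) (HZ : Matrix m α (ZMod 2)) : Prop :=
  ∀ a : m → ZMod 2, Matrix.vecMul a HZ ≠ 0 →
    ∃ b : m → ZMod 2, Matrix.vecMul b HZ = 0 ∧
      ε * (wt (a + b) : ℝ) ≤ (wt (Matrix.vecMul a HZ) : ℝ)

lemma splitHZ_vecMul_inl {N nX nZ : ℕ} (HX : Matrix (Fin nX) (Fin N) (ZMod 2))
    (HZ : Matrix (Fin nZ) (Fin N) (ZMod 2))
    (q : ∀ i : {i : Fin nX // 4 ≤ wt (HX i)}, Fin (wt (HX i.1)) → Fin N)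
    (v : Fin nZ → ZMod 2) (p : Fin N) :
    Matrix.vecMul v (splitHZ HX HZ q) (Sum.inl p) = Matrix.vecMul v HZ p := by
  simp [Matrix.vecMul, dotProduct, splitHZ]

lemma splitHZ_vecMul_inr {N nX nZ : ℕ} (HX : Matrix (Fin nX) (Fin N) (ZMod 2))
    (HZ : Matrix (Fin nZ) (Fin N) (ZMod 2))
    (q : ∀ i : {i : Fin nX // 4 ≤ wt (HX i)}, Fin (wt (HX i.1)) → Fin N)
    (v : Fin nZ → ZMod 2) (i : {i : Fin nX // 4 ≤ wt (HX i)}) (m : Fin (wt (HX i.1) - 3)) :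
    Matrix.vecMul v (splitHZ HX HZ q) (Sum.inr ⟨i, m⟩) =
      ∑ a : Fin (wt (HX i.1)), if a.val ≤ m.val + 1 then Matrix.vecMul v HZ (q i a) else 0 := by
  simp only [Matrix.vecMul, dotProduct, splitHZ, Finset.mul_sum]
  rw [Finset.sum_comm]
  refine Finset.sum_congr rfl fun a _ => ?_
  by_cases h : a.val ≤ m.val + 1 <;> simp [h, Finset.mul_sum]

lemma splitHZ_vecMul_zero {N nX nZ : ℕ} (HX : Matrix (Fin nX) (Fin N) (ZMod 2))
    (HZ : Matrix (Fin nZ) (Fin N) (ZMod 2))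
    (q : ∀ i : {i : Fin nX // 4 ≤ wt (HX i)}, Fin (wt (HX i.1)) → Fin N)
    (v : Fin nZ → ZMod 2) (hv : Matrix.vecMul v HZ = 0) :
    Matrix.vecMul v (splitHZ HX HZ q) = 0 := by
  funext j
  match j with
  | Sum.inl p => rw [splitHZ_vecMul_inl, hv]; rfl
  | Sum.inr ⟨i, m⟩ =>
      rw [splitHZ_vecMul_inr, hv]
      simp

/-- If `C` is `ε`-Z-cosound, then the code `C̃` obtained from `C` by the
full X-type generator splitting procedure (whose Z-type generators are in bijection with
those of `C`) is `ε`-Z-cosound. -/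
theorem stmt18 (HX : Matrix (Fin nX) (Fin N) (ZMod 2)) (HZ : Matrix (Fin nZ) (Fin N) (ZMod 2))
    (hCSS : HX * HZ.transpose = 0)
    (q : ∀ i : {i : Fin nX // 4 ≤ wt (HX i)}, Fin (wt (HX i.1)) → Fin N)
    (hinj : ∀ i, Function.Injective (q i))
    (hrange : ∀ i p, HX i.1 p ≠ 0 ↔ p ∈ Set.range (q i))
    (ε : ℝ) (hε : 0 < ε) (hcosound : ZCosound ε HZ) :
    ZCosound ε (splitHZ HX HZ q) := by
  intro a ha
  have haHZ : Matrix.vecMul a HZ ≠ 0 := by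
    intro h
    exact ha (splitHZ_vecMul_zero HX HZ q a h)
  obtain ⟨b, hb, hwb⟩ := hcosound a haHZ
  refine ⟨b, splitHZ_vecMul_zero HX HZ q b hb, hwb.trans ?_⟩
  have hle : wt (Matrix.vecMul a HZ) ≤ wt (Matrix.vecMul a (splitHZ HX HZ q)) := by
    apply Finset.card_le_card_of_injOn (fun p => Sum.inl p)
    · intro p hp
      simp only [Finset.mem_coe, Finset.mem_filter, Finset.mem_univ, true_and] at hp ⊢
      rwa [splitHZ_vecMul_inl]
    · intro x _ y _ h
      exact Sum.inl.injEq _ _ ▸ h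
  exact_mod_cast hle
end

section
/- Let C be a CSS code, let l ≥ 2 be an integer, and let D be the fully thickened code of C with parameter l. If C is ε-X-sound for some ε > 0, then D is ε′-X-sound with ε′ = ε/(l·(1+ε)). -/
open Matrix

variable {N nX nZ : ℕ}

/-- Qubits of the thickened code: qubits `(q,k)` for `q` a qubit of `C` and `k ∈ {1,…,l}`
(0-indexed below), together with qubits `[s,k]` for `s` a row of `H_X` and
`k ∈ {1,…,l−1}`. -/
abbrev TQubit (N nX l : ℕ) : Type := (Fin N × Fin l) ⊕ (Fin nX × Fin (l - 1))

/-- Row index type of the Z-type generator matrix of the thickened code: one generator for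
each row of `H_Z` (type (i)), and one for each pair of a qubit `q` of `C` and
`k ∈ {1,…,l−1}` (type (ii)). -/
abbrev TZIdx (N nZ l : ℕ) : Type := Fin nZ ⊕ (Fin N × Fin (l - 1))

/-- X-type generator matrix of the thickened code: for each row `s` of `HX` with support
`{q₁,…,q_w}` and each `k ∈ {1,…,l}` (0-indexed here), one generator with support
`{(q₁,k),…,(q_w,k)} ∪ {[s,k−1],[s,k]}` (with `[s,0]`, `[s,l]` omitted at the ends). -/
def thickHX (HX : Matrix (Fin nX) (Fin N) (ZMod 2)) (l : ℕ) :
    Matrix (Fin nX × Fin l) (TQubit N nX l) (ZMod 2) := fun s j =>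
  match s, j with
  | (s, k), Sum.inl (p, k') => if k' = k then HX s p else 0
  | (s, k), Sum.inr (s', k') =>
      if s' = s ∧ ((k'.val = k.val) ∨ (k'.val + 1 = k.val)) then 1 else 0

/-- Z-type generator matrix of the thickened code with choice function `κ`:
(i) for each row `r` of `HZ` with support `{q₁,…,q_w}`, one generator with support
`{(q₁,κ(r)),…,(q_w,κ(r))}`; (ii) for each qubit `q` of `C` and each `k ∈ {1,…,l−1}`
(0-indexed here), one generator with support
`{(q,k),(q,k+1)} ∪ {[s,k] : row s of HX acts on q}`. -/
def thickHZ (HX : Matrix (Fin nX) (Fin N) (ZMod 2)) (HZ : Matrix (Fin nZ) (Fin N) (ZMod 2))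
    (l : ℕ) (κ : Fin nZ → Fin l) :
    Matrix (TZIdx N nZ l) (TQubit N nX l) (ZMod 2) := fun r j =>
  match r, j with
  | Sum.inl R, Sum.inl (p, k) => if k = κ R then HZ R p else 0
  | Sum.inl _, Sum.inr _ => 0
  | Sum.inr (p, k), Sum.inl (p', k') =>
      if p' = p ∧ ((k'.val = k.val) ∨ (k'.val = k.val + 1)) then 1 else 0
  | Sum.inr (p, k), Sum.inr (s, k') => if k'.val = k.val then HX s p else 0

/-- Z-type generator matrix of the *fully thickened* code `D`: for each row `r` of `HZ`
and EACH `k ∈ {1,…,l}`, one generator with support `{(q₁,k),…,(q_w,k)}` (type (i)),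
together with the type (ii) generators with supports
`{(q,k),(q,k+1)} ∪ {[s,k] : row s of HX acts on q}`. -/
def fullThickHZ (HX : Matrix (Fin nX) (Fin N) (ZMod 2)) (HZ : Matrix (Fin nZ) (Fin N) (ZMod 2))
    (l : ℕ) :
    Matrix ((Fin nZ × Fin l) ⊕ (Fin N × Fin (l - 1))) (TQubit N nX l) (ZMod 2) := fun r j =>
  match r, j with
  | Sum.inl (R, k), Sum.inl (p, k') => if k' = k then HZ R p else 0
  | Sum.inl _, Sum.inr _ => 0
  | Sum.inr (p, k), Sum.inl (p', k') =>
      if p' = p ∧ ((k'.val = k.val) ∨ (k'.val = k.val + 1)) then 1 else 0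
  | Sum.inr (p, k), Sum.inr (s, k') => if k'.val = k.val then HX s p else 0

/-- A CSS code (given by its Z-type generator matrix `HZ`) is `ε`-X-sound if for every
`v` with `H_Z·v ≠ 0` there exists `u ∈ ker(H_Z)` with `wt(H_Z·v) ≥ ε·wt(v+u)`. -/
def XSound {m α : Type*} [Fintype m] [Fintype α] (ε : ℝ) (HZ : Matrix m α (ZMod 2)) : Prop :=
  ∀ v : α → ZMod 2, HZ.mulVec v ≠ 0 →
    ∃ u : α → ZMod 2, HZ.mulVec u = 0 ∧ ε * (wt (v + u) : ℝ) ≤ (wt (HZ.mulVec v) : ℝ)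

-- ===== auxiliary lemmas =====

lemma zmod2_add_self (x : ZMod 2) : x + x = 0 := by revert x; decide

lemma wt_eq_sum {α : Type*} [Fintype α] (v : α → ZMod 2) :
    wt v = ∑ a, if v a ≠ 0 then 1 else 0 := by
  classical
  simp [wt, Finset.card_filter]

lemma wt_zero {α : Type*} [Fintype α] : wt (fun _ : α => (0 : ZMod 2)) = 0 := by
  simp [wt]

lemma wt_add_le {α : Type*} [Fintype α] (x y : α → ZMod 2) :
    wt (fun a => x a + y a) ≤ wt x + wt y := by
  classical
  rw [wt_eq_sum, wt_eq_sum, wt_eq_sum, ← Finset.sum_add_distrib]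
  apply Finset.sum_le_sum
  intro a _
  by_cases hx : x a = 0 <;> by_cases hy : y a = 0 <;> simp [hx, hy] <;> split <;> norm_num

lemma wt_sum_le {α ι : Type*} [Fintype α] (s : Finset ι) (f : ι → α → ZMod 2) :
    wt (fun a => ∑ j ∈ s, f j a) ≤ ∑ j ∈ s, wt (f j) := by
  classical
  induction s using Finset.induction with
  | empty => simp [wt_zero]
  | insert _ _ h ih =>
    rename_i i s
    rw [Finset.sum_insert h]
    calc wt (fun a => ∑ j ∈ insert i s, f j a)
        = wt (fun a => f i a + ∑ j ∈ s, f j a) := by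
          congr 1; funext a; rw [Finset.sum_insert h]
      _ ≤ wt (f i) + wt (fun a => ∑ j ∈ s, f j a) := wt_add_le _ _
      _ ≤ _ := Nat.add_le_add_left ih _

lemma wt_sum_type {α β : Type*} [Fintype α] [Fintype β] (f : α ⊕ β → ZMod 2) :
    wt f = wt (fun a => f (Sum.inl a)) + wt (fun b => f (Sum.inr b)) := by
  classical
  rw [wt_eq_sum, wt_eq_sum, wt_eq_sum, Fintype.sum_sum_type]

lemma wt_prod {α β : Type*} [Fintype α] [Fintype β] (g : α × β → ZMod 2) :
    wt g = ∑ b, wt (fun a => g (a, b)) := by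
  classical
  rw [wt_eq_sum, Fintype.sum_prod_type, Finset.sum_comm]
  exact Finset.sum_congr rfl fun b _ => (wt_eq_sum _).symm

lemma sum_ite_or {γ : Type*} [Fintype γ] [DecidableEq γ] (a b : γ) (hab : a ≠ b)
    (f : γ → ZMod 2) :
    (∑ x, if x = a ∨ x = b then f x else 0) = f a + f b := by
  classical
  rw [← Finset.sum_filter]
  have : Finset.univ.filter (fun x => x = a ∨ x = b) = {a, b} := by
    ext x; simp
  rw [this, Finset.sum_pair hab]

lemma mulVec_inl (HX : Matrix (Fin nX) (Fin N) (ZMod 2)) (HZ : Matrix (Fin nZ) (Fin N) (ZMod 2))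
    (l : ℕ) (w : TQubit N nX l → ZMod 2) (R : Fin nZ) (k : Fin l) :
    ((fullThickHZ HX HZ l).mulVec w) (Sum.inl (R, k)) = ∑ p, HZ R p * w (Sum.inl (p, k)) := by
  classical
  simp only [mulVec, dotProduct, fullThickHZ, Fintype.sum_sum_type, Fintype.sum_prod_type,
    ite_mul, zero_mul, one_mul]
  rw [Finset.sum_comm]
  simp [Finset.sum_ite_eq' Finset.univ k]

lemma mulVec_inr (HX : Matrix (Fin nX) (Fin N) (ZMod 2)) (HZ : Matrix (Fin nZ) (Fin N) (ZMod 2))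
    (l : ℕ) (w : TQubit N nX l → ZMod 2) (p : Fin N) (k : Fin (l - 1))
    (h1 : (k : ℕ) < l) (h2 : (k : ℕ) + 1 < l) :
    ((fullThickHZ HX HZ l).mulVec w) (Sum.inr (p, k)) =
      w (Sum.inl (p, ⟨k, h1⟩)) + w (Sum.inl (p, ⟨(k : ℕ) + 1, h2⟩))
        + ∑ s, HX s p * w (Sum.inr (s, k)) := by
  classical
  simp only [mulVec, dotProduct, fullThickHZ, Fintype.sum_sum_type, Fintype.sum_prod_type,
    ite_mul, zero_mul, one_mul]
  congr 1
  · have key : ∀ p' : Fin N, ∀ k' : Fin l,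
        (p' = p ∧ ((k' : ℕ) = (k : ℕ) ∨ (k' : ℕ) = (k : ℕ) + 1)) ↔
        (p' = p ∧ (k' = (⟨k, h1⟩ : Fin l) ∨ k' = ⟨(k : ℕ) + 1, h2⟩)) := by
      intro p' k'
      simp [Fin.ext_iff]
    simp only [key]
    rw [Finset.sum_comm]
    have : ∀ k' : Fin l, (∑ p' : Fin N, if p' = p ∧ (k' = (⟨k, h1⟩ : Fin l) ∨ k' = ⟨(k : ℕ) + 1, h2⟩) then w (Sum.inl (p', k')) else 0)
        = if k' = (⟨k, h1⟩ : Fin l) ∨ k' = ⟨(k : ℕ) + 1, h2⟩ then w (Sum.inl (p, k')) else 0 := by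
      intro k'
      simp only [ite_and]
      rw [Finset.sum_ite_eq' Finset.univ p]
      simp
    rw [Finset.sum_congr rfl (fun k' _ => this k')]
    rw [sum_ite_or]
    intro h
    rw [Fin.ext_iff] at h
    simp at h
  · have : ∀ s, (∑ k' : Fin (l-1), if (k' : ℕ) = (k : ℕ) then HX s p * w (Sum.inr (s, k')) else 0)
        = HX s p * w (Sum.inr (s, k)) := by
      intro s
      simp only [Fin.val_eq_val]
      rw [Finset.sum_ite_eq' Finset.univ k]
      simp
    rw [Finset.sum_congr rfl (fun s _ => this s)]

lemma telescope (g : ℕ → ZMod 2) (m : ℕ) :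
    ∑ j ∈ Finset.range m, (g j + g (j + 1)) = g 0 + g m := by
  induction m with
  | zero => simp [zmod2_add_self]
  | succ m ih =>
    rw [Finset.sum_range_succ, ih]
    linear_combination zmod2_add_self (g m)


/-- If `C` is `ε`-X-sound for some `ε > 0`, then the fully thickened
code `D` with parameter `l ≥ 2` is `ε′`-X-sound with `ε′ = ε/(l·(1+ε))`. -/
theorem stmt19 (HX : Matrix (Fin nX) (Fin N) (ZMod 2)) (HZ : Matrix (Fin nZ) (Fin N) (ZMod 2))
    (hCSS : HX * HZ.transpose = 0) (l : ℕ) (hl : 2 ≤ l)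
    (ε : ℝ) (hε : 0 < ε) (hsound : XSound ε HZ) :
    XSound (ε / ((l : ℝ) * (1 + ε))) (fullThickHZ HX HZ l) := by
  classical
  intro v _hv
  have h0l : 0 < l := by omega
  -- base layer of v
  set c : Fin N → ZMod 2 := fun p => v (Sum.inl (p, ⟨0, h0l⟩)) with hc
  obtain ⟨w, hw0, hwb⟩ :
      ∃ w, HZ.mulVec w = 0 ∧ ε * (wt (c + w) : ℝ) ≤ (wt (HZ.mulVec c) : ℝ) := by
    by_cases h : HZ.mulVec c = 0
    · refine ⟨c, h, ?_⟩
      have hcc : c + c = fun _ : Fin N => (0 : ZMod 2) := by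
        funext p; exact zmod2_add_self _
      rw [hcc, wt_zero]
      simp only [Nat.cast_zero, mul_zero]
      positivity
    · exact hsound c h
  set d : Fin N → ZMod 2 := c + w with hd
  set Sv := (fullThickHZ HX HZ l).mulVec v with hSvdef
  -- τ and σ layers of the syndrome, ℕ-indexed
  set τn : Fin N → ℕ → ZMod 2 :=
    fun p j => if h : j < l - 1 then Sv (Sum.inr (p, ⟨j, h⟩)) else 0 with hτn
  set gs : Fin nZ → ℕ → ZMod 2 :=
    fun R j => if h : j < l then Sv (Sum.inl (R, ⟨j, h⟩)) else 0 with hgs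
  set T : Fin N → ℕ → ZMod 2 := fun p k => ∑ j ∈ Finset.range k, τn p j with hT
  set v'' : TQubit N nX l → ZMod 2 :=
    Sum.elim (fun pk => d pk.1 + T pk.1 pk.2.val) (fun _ => 0) with hv''
  -- key: applying HZ to a τ-layer gives consecutive σ-layers
  have key : ∀ (R : Fin nZ) (j : ℕ), j < l - 1 →
      (∑ p, HZ R p * τn p j) = gs R j + gs R (j + 1) := by
    intro R j hj
    have hj1 : j < l := by omega
    have hj2 : j + 1 < l := by omega
    have hτj : ∀ p, τn p j = v (Sum.inl (p, ⟨j, hj1⟩)) + v (Sum.inl (p, ⟨j + 1, hj2⟩))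
        + ∑ s, HX s p * v (Sum.inr (s, ⟨j, hj⟩)) := by
      intro p
      rw [hτn]
      simp only [dif_pos hj]
      rw [hSvdef]
      exact mulVec_inr HX HZ l v p ⟨j, hj⟩ hj1 hj2
    have hzero : (∑ p, HZ R p * ∑ s, HX s p * v (Sum.inr (s, ⟨j, hj⟩))) = 0 := by
      calc (∑ p, HZ R p * ∑ s, HX s p * v (Sum.inr (s, ⟨j, hj⟩)))
          = ∑ p, ∑ s, HZ R p * (HX s p * v (Sum.inr (s, ⟨j, hj⟩))) := by
            exact Finset.sum_congr rfl fun p _ => Finset.mul_sum _ _ _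
        _ = ∑ s, ∑ p, HZ R p * (HX s p * v (Sum.inr (s, ⟨j, hj⟩))) := Finset.sum_comm
        _ = ∑ s, (∑ p, HX s p * HZ R p) * v (Sum.inr (s, ⟨j, hj⟩)) := by
            refine Finset.sum_congr rfl fun s _ => ?_
            rw [Finset.sum_mul]
            exact Finset.sum_congr rfl fun p _ => by ring
        _ = ∑ s, ((HX * HZ.transpose) s R) * v (Sum.inr (s, ⟨j, hj⟩)) := by
            refine Finset.sum_congr rfl fun s _ => ?_
            simp [Matrix.mul_apply, Matrix.transpose_apply]
        _ = 0 := by simp [hCSS]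
    calc (∑ p, HZ R p * τn p j)
        = ∑ p, (HZ R p * v (Sum.inl (p, ⟨j, hj1⟩)) + HZ R p * v (Sum.inl (p, ⟨j + 1, hj2⟩))
            + HZ R p * ∑ s, HX s p * v (Sum.inr (s, ⟨j, hj⟩))) := by
          refine Finset.sum_congr rfl fun p _ => ?_
          rw [hτj p]; ring
      _ = (∑ p, HZ R p * v (Sum.inl (p, ⟨j, hj1⟩)))
            + (∑ p, HZ R p * v (Sum.inl (p, ⟨j + 1, hj2⟩)))
            + ∑ p, HZ R p * ∑ s, HX s p * v (Sum.inr (s, ⟨j, hj⟩)) := by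
          rw [Finset.sum_add_distrib, Finset.sum_add_distrib]
      _ = gs R j + gs R (j + 1) + 0 := by
          rw [hzero]
          congr 1
          congr 1
          · rw [hgs]; simp only [dif_pos hj1]
            rw [hSvdef, mulVec_inl]
          · rw [hgs]; simp only [dif_pos hj2]
            rw [hSvdef, mulVec_inl]
      _ = gs R j + gs R (j + 1) := by rw [add_zero]
  -- gs at a Fin index
  have hgs_fin : ∀ (R : Fin nZ) (k : Fin l), gs R (k : ℕ) = Sv (Sum.inl (R, k)) := by
    intro R k
    rw [hgs]
    simp only [dif_pos k.isLt]
  have hτn_fin : ∀ (p : Fin N) (k : Fin (l - 1)), τn p (k : ℕ) = Sv (Sum.inr (p, k)) := by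
    intro p k
    rw [hτn]
    simp only [dif_pos k.isLt]
  -- the syndrome of v'' equals that of v
  have hMv'' : ∀ x, ((fullThickHZ HX HZ l).mulVec v'') x = Sv x := by
    intro x
    match x with
    | Sum.inl (R, k) =>
      rw [mulVec_inl HX HZ l v'' R k]
      have hv''l : ∀ (p : Fin N) (k : Fin l), v'' (Sum.inl (p, k)) = d p + T p (k : ℕ) := by
        intro p k; rw [hv'']; rfl
      have step1 : (∑ p, HZ R p * v'' (Sum.inl (p, k)))
          = (∑ p, HZ R p * d p) + ∑ p, HZ R p * T p (k : ℕ) := by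
        rw [← Finset.sum_add_distrib]
        refine Finset.sum_congr rfl fun p _ => ?_
        rw [hv''l]; ring
      have hd1 : (∑ p, HZ R p * d p) = gs R 0 := by
        have hcpart : (∑ p, HZ R p * c p) = gs R 0 := by
          have : gs R 0 = Sv (Sum.inl (R, ⟨0, h0l⟩)) := by
            rw [hgs]; simp only [dif_pos h0l]
          rw [this, hSvdef, mulVec_inl]
        have hwpart : (∑ p, HZ R p * w p) = 0 := by
          have := congrFun hw0 R
          simpa [mulVec, dotProduct] using this
        calc (∑ p, HZ R p * d p) = (∑ p, HZ R p * c p) + ∑ p, HZ R p * w p := by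
              rw [← Finset.sum_add_distrib]
              refine Finset.sum_congr rfl fun p _ => ?_
              rw [hd]; simp [Pi.add_apply]; ring
          _ = gs R 0 + 0 := by rw [hcpart, hwpart]
          _ = gs R 0 := add_zero _
      have hd2 : (∑ p, HZ R p * T p (k : ℕ)) = gs R 0 + gs R (k : ℕ) := by
        calc (∑ p, HZ R p * T p (k : ℕ))
            = ∑ p, ∑ j ∈ Finset.range (k : ℕ), HZ R p * τn p j := by
              refine Finset.sum_congr rfl fun p _ => ?_
              rw [hT, Finset.mul_sum]
          _ = ∑ j ∈ Finset.range (k : ℕ), ∑ p, HZ R p * τn p j := Finset.sum_comm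
          _ = ∑ j ∈ Finset.range (k : ℕ), (gs R j + gs R (j + 1)) := by
              refine Finset.sum_congr rfl fun j hj => ?_
              exact key R j (by have := k.isLt; have := Finset.mem_range.mp hj; omega)
          _ = gs R 0 + gs R (k : ℕ) := telescope _ _
      rw [step1, hd1, hd2, ← hgs_fin R k]
      linear_combination zmod2_add_self (gs R 0)
    | Sum.inr (p, k) =>
      have h1 : (k : ℕ) < l := by have := k.isLt; omega
      have h2 : (k : ℕ) + 1 < l := by have := k.isLt; omega
      rw [mulVec_inr HX HZ l v'' p k h1 h2]
      have e1 : v'' (Sum.inl (p, (⟨k, h1⟩ : Fin l))) = d p + T p (k : ℕ) := by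
        rw [hv'']; rfl
      have e2 : v'' (Sum.inl (p, (⟨(k : ℕ) + 1, h2⟩ : Fin l))) = d p + T p ((k : ℕ) + 1) := by
        rw [hv'']; rfl
      have e3 : (∑ s, HX s p * v'' (Sum.inr (s, k))) = 0 := by
        refine Finset.sum_eq_zero fun s _ => ?_
        rw [hv'']; simp
      rw [e1, e2, e3]
      have e4 : T p ((k : ℕ) + 1) = T p (k : ℕ) + τn p (k : ℕ) := by
        rw [hT]; exact Finset.sum_range_succ _ _
      rw [e4, ← hτn_fin p k]
      linear_combination zmod2_add_self (d p) + zmod2_add_self (T p (k : ℕ))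
  have hker : (fullThickHZ HX HZ l).mulVec (v + v'') = 0 := by
    funext x
    rw [Matrix.mulVec_add]
    have : ((fullThickHZ HX HZ l).mulVec v + (fullThickHZ HX HZ l).mulVec v'') x
        = Sv x + Sv x := by
      rw [Pi.add_apply, hMv'' x, hSvdef]
    rw [this, zmod2_add_self]
    rfl
  refine ⟨v + v'', hker, ?_⟩
  have hveq : v + (v + v'') = v'' := by
    funext x
    simp only [Pi.add_apply]
    rw [← add_assoc, zmod2_add_self, zero_add]
  rw [hveq]
  -- weight bounds
  set Sτ : ℕ := ∑ j ∈ Finset.range (l - 1), wt (fun p => τn p j) with hSτdef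
  have hwt1 : wt v'' = ∑ k : Fin l, wt (fun p => d p + T p (k : ℕ)) := by
    rw [wt_sum_type v'']
    have h2' : wt (fun b : Fin nX × Fin (l - 1) => v'' (Sum.inr b)) = 0 := by
      have : (fun b : Fin nX × Fin (l - 1) => v'' (Sum.inr b))
          = fun _ : Fin nX × Fin (l - 1) => (0 : ZMod 2) := by
        funext b; rw [hv'']; rfl
      rw [this, wt_zero]
    have h1' : wt (fun a : Fin N × Fin l => v'' (Sum.inl a))
        = ∑ k : Fin l, wt (fun p => d p + T p (k : ℕ)) := by
      have : (fun a : Fin N × Fin l => v'' (Sum.inl a))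
          = fun a : Fin N × Fin l => d a.1 + T a.1 (a.2 : ℕ) := by
        funext a; rw [hv'']; rfl
      rw [this, wt_prod]
    rw [h1', h2', add_zero]
  have hwt2 : ∀ k : Fin l, wt (fun p => d p + T p (k : ℕ)) ≤ wt d + Sτ := by
    intro k
    calc wt (fun p => d p + T p (k : ℕ)) ≤ wt d + wt (fun p => T p (k : ℕ)) := wt_add_le d _
      _ ≤ wt d + ∑ j ∈ Finset.range (k : ℕ), wt (fun p => τn p j) := by
          refine Nat.add_le_add_left ?_ _
          have : (fun p => T p (k : ℕ)) = fun p => ∑ j ∈ Finset.range (k : ℕ), τn p j := by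
            funext p; rw [hT]
          rw [this]
          exact wt_sum_le _ _
      _ ≤ wt d + Sτ := by
          refine Nat.add_le_add_left ?_ _
          rw [hSτdef]
          refine Finset.sum_le_sum_of_subset (Finset.range_subset_range.mpr ?_)
          have := k.isLt; omega
  have hwtv : wt v'' ≤ l * (wt d + Sτ) := by
    rw [hwt1]
    calc (∑ k : Fin l, wt (fun p => d p + T p (k : ℕ)))
        ≤ ∑ _k : Fin l, (wt d + Sτ) := Finset.sum_le_sum fun k _ => hwt2 k
      _ = l * (wt d + Sτ) := by simp [Finset.sum_const, mul_comm]
  have hSτle : Sτ ≤ wt Sv := by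
    have heq : Sτ = wt (fun b : Fin N × Fin (l - 1) => Sv (Sum.inr b)) := by
      rw [wt_prod, hSτdef, ← Fin.sum_univ_eq_sum_range (fun j => wt (fun p => τn p j)) (l - 1)]
      refine Finset.sum_congr rfl fun k _ => ?_
      congr 1
      funext p
      exact hτn_fin p k
    rw [heq, wt_sum_type Sv]
    exact Nat.le_add_left _ _
  have hσ0le : wt (HZ.mulVec c) ≤ wt Sv := by
    have heq : HZ.mulVec c = fun R => Sv (Sum.inl (R, ⟨0, h0l⟩)) := by
      funext R
      rw [hSvdef, mulVec_inl HX HZ l v R ⟨0, h0l⟩]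
      simp [mulVec, dotProduct, hc]
    rw [heq, wt_sum_type Sv]
    calc wt (fun R => Sv (Sum.inl (R, ⟨0, h0l⟩)))
        ≤ ∑ k : Fin l, wt (fun R => Sv (Sum.inl (R, k))) := by
          exact Finset.single_le_sum
            (f := fun k : Fin l => wt (fun R => Sv (Sum.inl (R, k))))
            (fun k _ => Nat.zero_le _) (Finset.mem_univ _)
      _ = wt (fun a : Fin nZ × Fin l => Sv (Sum.inl a)) :=
          (wt_prod (fun a : Fin nZ × Fin l => Sv (Sum.inl a))).symm
      _ ≤ _ := Nat.le_add_right _ _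
  have hdS : ε * (wt d : ℝ) ≤ (wt Sv : ℝ) :=
    le_trans hwb (by exact_mod_cast hσ0le)
  have hlR : (2 : ℝ) ≤ (l : ℝ) := by exact_mod_cast hl
  have hwtvR : (wt v'' : ℝ) ≤ (l : ℝ) * ((wt d : ℝ) + (Sτ : ℝ)) := by exact_mod_cast hwtv
  have hSτR : (Sτ : ℝ) ≤ (wt Sv : ℝ) := by exact_mod_cast hSτle
  have hpos : (0 : ℝ) < (l : ℝ) * (1 + ε) := by nlinarith
  rw [div_mul_eq_mul_div, div_le_iff₀ hpos]
  nlinarith [mul_le_mul_of_nonneg_left hwtvR hε.le,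
             mul_le_mul_of_nonneg_left hdS (by linarith : (0:ℝ) ≤ (l:ℝ)),
             mul_le_mul_of_nonneg_left hSτR (by positivity : (0:ℝ) ≤ ε * (l:ℝ))]
end
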